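/- The rotated teleportation pattern implements a Z-rotation: for any |ψ⟩ ∈ ℂ², α ∈ ℝ, and outcome s ∈ {0,1}, (⟨(−1)^s _α| ⊗ I) ∘ ΛZ (|ψ⟩ ⊗ |+⟩) = (1/√2) X^s H R_z(−α) |ψ⟩, where ⟨(−1)^s_α| denotes projection of the first qubit onto |+_α⟩ (s=0) or |−_α⟩ (s=1). -/
import Mathlib


open Matrix

/-- The controlled-Z gate `diag(1,1,1,-1)` on `ℂ²⊗ℂ²`. -/
def CZ : Matrix (Fin 2 × Fin 2) (Fin 2 × Fin 2) ℂ :=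
  Matrix.of fun a b => if a = b then (if a = (1, 1) then -1 else 1) else 0

/-- The Hadamard gate. -/
noncomputable def Had : Matrix (Fin 2) (Fin 2) ℂ :=
  (1 / (Real.sqrt 2 : ℂ)) • !![1, 1; 1, -1]

def PauliX : Matrix (Fin 2) (Fin 2) ℂ := !![0, 1; 1, 0]
def Xpow (s : Bool) : Matrix (Fin 2) (Fin 2) ℂ := if s then PauliX else 1

/-- The Z-rotation `R_z(α) = diag(1, e^{iα})`. -/
noncomputable def Rz (α : ℝ) : Matrix (Fin 2) (Fin 2) ℂ :=
  !![1, 0; 0, Complex.exp ((α : ℂ) * Complex.I)]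

/-- `|±_α⟩`; `s = false` is `+`, `s = true` is `−`. -/
noncomputable def ketPM (s : Bool) (α : ℝ) : Fin 2 → ℂ :=
  ![1 / Real.sqrt 2,
    (if s then -1 else 1) * Complex.exp ((α : ℂ) * Complex.I) / Real.sqrt 2]

/-- `|+⟩ = |+_0⟩`. -/
noncomputable def ketP : Fin 2 → ℂ := ![1 / Real.sqrt 2, 1 / Real.sqrt 2]

/-- The rotated teleportation pattern implements a Z-rotation. -/
theorem teleportation_rotation (ψ : Fin 2 → ℂ) (α : ℝ) (s : Bool) :
    (fun j => ∑ i, star (ketPM s α i) *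
        (CZ.mulVec fun p => ψ p.1 * ketP p.2) (i, j)) =
      (1 / (Real.sqrt 2 : ℂ)) • (Xpow s).mulVec (Had.mulVec ((Rz (-α)).mulVec ψ)) := by
  have hs2 : (Real.sqrt 2 : ℂ) ≠ 0 := by
    norm_cast; positivity
  have hconj : (starRingEnd ℂ) (Complex.exp ((α : ℂ) * Complex.I)) =
      Complex.exp (((-α : ℝ) : ℂ) * Complex.I) := by
    rw [← Complex.exp_conj, _root_.map_mul, Complex.conj_ofReal, Complex.conj_I]; push_cast; ring_nf
  funext j
  fin_cases s <;> fin_cases j <;>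
    simp [CZ, Had, Xpow, PauliX, Rz, ketPM, ketP, mulVec, dotProduct,
      Fin.sum_univ_two, Fintype.sum_prod_type, Matrix.smul_apply, Prod.ext_iff,
      Complex.exp_neg, star_div₀, hconj] <;>
    field_simp <;> ring
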